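/- arXiv:2012.04110 — 6 statements merged into one kernel-verified Lean document; each statement's English description precedes it below -/
import Mathlib

section
/- Let $w=e^f$ where $f$ is locally integrable with respect to $\mathscr{G}$. Then $([w]_{A_2})^{1/2} \le \sup_{G\in\mathscr{G}} \fint_G e^{|f-f_G|}\,d\mu \le 2[w]_{A_2}$, where $[w]_{A_2} = \sup_{G\in\mathscr{G}} (\fint_G w\,d\mu)(\fint_G w^{-1}\,d\mu)$. -/
open MeasureTheory ENNReal Real

private lemma avg_mono {X : Type*} [MeasurableSpace X] {ν : Measure X} {g h : X → ℝ}
    (hg : Integrable g ν) (hh : Integrable h ν) (hle : ∀ x, g x ≤ h x) :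
    ⨍ x, g x ∂ν ≤ ⨍ x, h x ∂ν := by
  rw [average_eq, average_eq, smul_eq_mul, smul_eq_mul]
  exact mul_le_mul_of_nonneg_left (integral_mono hg hh hle) (by positivity)

private lemma avg_const_mul {X : Type*} [MeasurableSpace X] (ν : Measure X) (c : ℝ) (g : X → ℝ) :
    ⨍ x, c * g x ∂ν = c * ⨍ x, g x ∂ν := by
  rw [average_eq, average_eq, integral_const_mul, smul_eq_mul, smul_eq_mul]
  ring

private lemma avg_add {X : Type*} [MeasurableSpace X] {ν : Measure X} {g h : X → ℝ}
    (hg : Integrable g ν) (hh : Integrable h ν) :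
    ⨍ x, (g x + h x) ∂ν = (⨍ x, g x ∂ν) + ⨍ x, h x ∂ν := by
  rw [average_eq, average_eq, average_eq, integral_add hg hh, smul_add]

/-- For `w = e^f` with `f` locally integrable w.r.t. `𝒢`,
`[w]_{A₂}^{1/2} ≤ sup_G ⨍_G e^{|f - f_G|} ≤ 2 [w]_{A₂}`. -/
theorem stmt_4 {X : Type*} [MeasurableSpace X] (μ : Measure X)
    (𝒢 : Set (Set X))
    (h𝒢 : ∀ G ∈ 𝒢, MeasurableSet G ∧ 0 < μ G ∧ μ G < ∞)
    (f : X → ℝ) (hf : Measurable f)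
    (hloc : ∀ G ∈ 𝒢, IntegrableOn f G μ)
    (hexp : ∀ G ∈ 𝒢, IntegrableOn (fun x => exp (f x)) G μ ∧
      IntegrableOn (fun x => exp (-f x)) G μ) :
    (⨆ G ∈ 𝒢, (⨍⁻ x in G, ENNReal.ofReal (exp (f x)) ∂μ) *
        (⨍⁻ x in G, ENNReal.ofReal (exp (-f x)) ∂μ)) ^ ((1 : ℝ) / 2) ≤
      (⨆ G ∈ 𝒢, ⨍⁻ x in G, ENNReal.ofReal (exp (|f x - ⨍ y in G, f y ∂μ|)) ∂μ) ∧
    (⨆ G ∈ 𝒢, ⨍⁻ x in G, ENNReal.ofReal (exp (|f x - ⨍ y in G, f y ∂μ|)) ∂μ) ≤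
      2 * ⨆ G ∈ 𝒢, (⨍⁻ x in G, ENNReal.ofReal (exp (f x)) ∂μ) *
        (⨍⁻ x in G, ENNReal.ofReal (exp (-f x)) ∂μ) := by
  -- per-G key facts
  have key : ∀ G ∈ 𝒢,
      ((⨍⁻ x in G, ENNReal.ofReal (exp (f x)) ∂μ) *
        (⨍⁻ x in G, ENNReal.ofReal (exp (-f x)) ∂μ)) ≤
        (⨍⁻ x in G, ENNReal.ofReal (exp (|f x - ⨍ y in G, f y ∂μ|)) ∂μ) *
        (⨍⁻ x in G, ENNReal.ofReal (exp (|f x - ⨍ y in G, f y ∂μ|)) ∂μ) ∧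
      (⨍⁻ x in G, ENNReal.ofReal (exp (|f x - ⨍ y in G, f y ∂μ|)) ∂μ) ≤
        2 * ((⨍⁻ x in G, ENNReal.ofReal (exp (f x)) ∂μ) *
        (⨍⁻ x in G, ENNReal.ofReal (exp (-f x)) ∂μ)) := by
    intro G hG
    obtain ⟨hGm, hG0, hGt⟩ := h𝒢 G hG
    haveI : IsFiniteMeasure (μ.restrict G) :=
      ⟨by rwa [Measure.restrict_apply_univ]⟩
    haveI : NeZero (μ.restrict G) := by
      refine ⟨fun h => ?_⟩
      have := Measure.restrict_apply_univ (μ := μ) G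
      rw [h] at this
      simp at this
      exact (hG0.ne' this.symm).elim
    obtain ⟨hi1, hi2⟩ := hexp G hG
    have hif := hloc G hG
    set c := ⨍ y in G, f y ∂μ with hc
    -- rewrite exp (f x - c) and exp (c - f x)
    have hfc : (fun x => exp (f x - c)) = fun x => exp (-c) * exp (f x) := by
      funext x; rw [← Real.exp_add]; ring_nf
    have hcf : (fun x => exp (c - f x)) = fun x => exp c * exp (-f x) := by
      funext x; rw [← Real.exp_add]; ring_nf
    have hifc : IntegrableOn (fun x => exp (f x - c)) G μ := by
      rw [hfc]; exact hi1.const_mul _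
    have hicf : IntegrableOn (fun x => exp (c - f x)) G μ := by
      rw [hcf]; exact hi2.const_mul _
    -- pointwise bound for exp |f x - c|
    have habs_le : ∀ x, exp (|f x - c|) ≤ exp (f x - c) + exp (c - f x) := by
      intro x
      rcases abs_cases (f x - c) with ⟨h1, _⟩ | ⟨h1, _⟩
      · rw [h1]; nlinarith [Real.exp_pos (c - f x)]
      · rw [h1]
        have : -(f x - c) = c - f x := by ring
        rw [this]; nlinarith [Real.exp_pos (f x - c)]
    have habs : IntegrableOn (fun x => exp (|f x - c|)) G μ := by
      refine Integrable.mono' (hifc.add hicf) ?_ ?_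
      · exact ((hf.sub measurable_const).abs.exp).aestronglyMeasurable
      · filter_upwards with x
        simp only [Pi.add_apply]
        rw [Real.norm_eq_abs, abs_of_nonneg (Real.exp_pos _).le]
        exact habs_le x
    -- Jensen's inequality
    have jensen1 : exp c ≤ ⨍ x in G, exp (f x) ∂μ := by
      have := convexOn_exp.map_average_le continuous_exp.continuousOn isClosed_univ
        (Filter.Eventually.of_forall fun x => Set.mem_univ (f x)) hif hi1
      simpa using this
    have jensen2 : exp (-c) ≤ ⨍ x in G, exp (-f x) ∂μ := by
      have := convexOn_exp.map_average_le continuous_exp.continuousOn isClosed_univ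
        (Filter.Eventually.of_forall fun x => Set.mem_univ (-f x)) hif.neg
        (by exact hi2)
      simpa [average_neg] using this
    set a := ⨍ x in G, exp (f x) ∂μ with ha
    set b := ⨍ x in G, exp (-f x) ∂μ with hb
    set s := ⨍ x in G, exp (|f x - c|) ∂μ with hs
    have ha0 : 0 < a := lt_of_lt_of_le (Real.exp_pos c) jensen1
    have hb0 : 0 < b := lt_of_lt_of_le (Real.exp_pos (-c)) jensen2
    -- average of exp(f-c) and exp(c-f)
    have avg_fc : ⨍ x in G, exp (f x - c) ∂μ = exp (-c) * a := by
      rw [show (fun x => exp (f x - c)) = fun x => exp (-c) * exp (f x) from hfc]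
      exact avg_const_mul _ _ _
    have avg_cf : ⨍ x in G, exp (c - f x) ∂μ = exp c * b := by
      rw [show (fun x => exp (c - f x)) = fun x => exp c * exp (-f x) from hcf]
      exact avg_const_mul _ _ _
    -- lower bound parts: exp(-c)*a ≤ s, exp(c)*b ≤ s
    have lb1 : exp (-c) * a ≤ s := by
      rw [← avg_fc]
      exact avg_mono hifc habs fun x => by
        exact Real.exp_le_exp.2 (le_abs_self _)
    have lb2 : exp c * b ≤ s := by
      rw [← avg_cf]
      refine avg_mono hicf habs fun x => Real.exp_le_exp.2 ?_
      rw [← abs_neg]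
      have : -(f x - c) = c - f x := by ring
      rw [← this]
      exact le_abs_self _
    -- real inequalities
    have hab_le : a * b ≤ s * s := by
      have : a * b = (exp (-c) * a) * (exp c * b) := by
        rw [show exp (-c) * a * (exp c * b) = (exp (-c) * exp c) * (a * b) by ring,
          ← Real.exp_add]
        simp
      rw [this]
      have h1 : 0 ≤ exp (-c) * a := by positivity
      exact mul_le_mul lb1 lb2 (by positivity) (le_trans h1 lb1)
    have hs_le : s ≤ 2 * (a * b) := by
      have h1 : s ≤ exp (-c) * a + exp c * b := by
        rw [← avg_fc, ← avg_cf, ← avg_add hifc hicf]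
        exact avg_mono habs (hifc.add hicf) habs_le
      have h2 : exp (-c) * a ≤ b * a := mul_le_mul_of_nonneg_right jensen2 ha0.le
      have h3 : exp c * b ≤ a * b := mul_le_mul_of_nonneg_right jensen1 hb0.le
      nlinarith
    -- convert to lintegral averages
    have eqA : (⨍⁻ x in G, ENNReal.ofReal (exp (f x)) ∂μ) = ENNReal.ofReal a := by
      rw [setLAverage_eq]
      exact (ofReal_setAverage hi1 (Filter.Eventually.of_forall fun x => (Real.exp_pos _).le)).symm
    have eqB : (⨍⁻ x in G, ENNReal.ofReal (exp (-f x)) ∂μ) = ENNReal.ofReal b := by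
      rw [setLAverage_eq]
      exact (ofReal_setAverage hi2 (Filter.Eventually.of_forall fun x => (Real.exp_pos _).le)).symm
    have eqS : (⨍⁻ x in G, ENNReal.ofReal (exp (|f x - c|)) ∂μ) = ENNReal.ofReal s := by
      rw [setLAverage_eq]
      exact (ofReal_setAverage habs (Filter.Eventually.of_forall fun x => (Real.exp_pos _).le)).symm
    rw [eqA, eqB, eqS]
    constructor
    · rw [← ENNReal.ofReal_mul ha0.le, ← ENNReal.ofReal_mul]
      · exact ENNReal.ofReal_le_ofReal hab_le
      · exact le_trans (by positivity : (0:ℝ) ≤ exp (-c) * a) lb1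
    · rw [← ENNReal.ofReal_mul ha0.le,
        show (2 : ℝ≥0∞) = ENNReal.ofReal 2 by simp,
        ← ENNReal.ofReal_mul (by norm_num)]
      exact ENNReal.ofReal_le_ofReal hs_le
  set T := (⨆ G ∈ 𝒢, ⨍⁻ x in G, ENNReal.ofReal (exp (|f x - ⨍ y in G, f y ∂μ|)) ∂μ) with hT
  constructor
  · have h1 : (⨆ G ∈ 𝒢, (⨍⁻ x in G, ENNReal.ofReal (exp (f x)) ∂μ) *
        (⨍⁻ x in G, ENNReal.ofReal (exp (-f x)) ∂μ)) ≤ T * T := by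
      refine iSup₂_le fun G hG => ?_
      refine le_trans (key G hG).1 ?_
      have hle : (⨍⁻ x in G, ENNReal.ofReal (exp (|f x - ⨍ y in G, f y ∂μ|)) ∂μ) ≤ T :=
        le_iSup₂ (f := fun G (_ : G ∈ 𝒢) =>
          ⨍⁻ x in G, ENNReal.ofReal (exp (|f x - ⨍ y in G, f y ∂μ|)) ∂μ) G hG
      exact mul_le_mul' hle hle
    calc (⨆ G ∈ 𝒢, (⨍⁻ x in G, ENNReal.ofReal (exp (f x)) ∂μ) *
        (⨍⁻ x in G, ENNReal.ofReal (exp (-f x)) ∂μ)) ^ ((1 : ℝ) / 2)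
        ≤ (T * T) ^ ((1 : ℝ) / 2) := ENNReal.rpow_le_rpow h1 (by norm_num)
      _ = T := by
          rw [show T * T = T ^ (((2:ℕ):ℝ)) by rw [ENNReal.rpow_natCast]; ring,
            ← ENNReal.rpow_mul]
          norm_num
  · refine iSup₂_le fun G hG => ?_
    refine le_trans (key G hG).2 ?_
    gcongr
    exact le_iSup₂ (f := fun G (_ : G ∈ 𝒢) =>
      (⨍⁻ x in G, ENNReal.ofReal (exp (f x)) ∂μ) *
      (⨍⁻ x in G, ENNReal.ofReal (exp (-f x)) ∂μ)) G hG
end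

section
/- Let $\mathscr{F}\subset\mathcal{M}^*$ be a family of sets of positive finite measure and $A\in\mathcal{M}^*$. If there is no countable subfamily of $\mathscr{F}$ whose union covers $A$ up to a null set, then there exists a measurable set $E\subset A$ with $\mu(E)>0$ such that $\mu(F\cap E)=0$ for every $F\in\mathscr{F}$. -/
open MeasureTheory ENNReal Set

/-- If a family `𝓕` of sets of positive finite measure admits no countable
subfamily essentially covering `A ∈ 𝓜*`, then there is a measurable `E ⊆ A` of positive
measure with `μ(F ∩ E) = 0` for every `F ∈ 𝓕`. -/
theorem stmt_11 {X : Type*} [MeasurableSpace X] (μ : Measure X)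
    (𝓕 : Set (Set X))
    (h𝓕 : ∀ F ∈ 𝓕, MeasurableSet F ∧ 0 < μ F ∧ μ F < ∞)
    (A : Set X) (hA : MeasurableSet A) (hApos : 0 < μ A) (hAfin : μ A < ∞)
    (hno : ¬ ∃ 𝓕₀ : Set (Set X), 𝓕₀ ⊆ 𝓕 ∧ 𝓕₀.Countable ∧ μ (A \ ⋃₀ 𝓕₀) = 0) :
    ∃ E : Set X, MeasurableSet E ∧ E ⊆ A ∧ 0 < μ E ∧ ∀ F ∈ 𝓕, μ (F ∩ E) = 0 := by
  classical
  set S : Set ℝ≥0∞ := (fun 𝓕₀ => μ (A ∩ ⋃₀ 𝓕₀)) '' {𝓕₀ | 𝓕₀ ⊆ 𝓕 ∧ 𝓕₀.Countable} with hS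
  set s := sSup S with hs
  have hsle : s ≤ μ A := by
    refine sSup_le ?_
    rintro _ ⟨𝓕₀, -, rfl⟩
    exact measure_mono inter_subset_left
  have hsne : s ≠ ∞ := (hsle.trans_lt hAfin).ne
  have key : ∀ n : ℕ, ∃ 𝓖 : Set (Set X), 𝓖 ⊆ 𝓕 ∧ 𝓖.Countable ∧
      s - ((n : ℝ≥0∞) + 1)⁻¹ ≤ μ (A ∩ ⋃₀ 𝓖) := by
    intro n
    rcases eq_or_ne s 0 with h0 | h0
    · exact ⟨∅, empty_subset _, countable_empty, by simp [h0, tsub_eq_zero_of_le]⟩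
    · have hlt : s - ((n : ℝ≥0∞) + 1)⁻¹ < s :=
        ENNReal.sub_lt_self hsne h0 (by simp)
      obtain ⟨a, haS, hlt'⟩ := lt_sSup_iff.mp hlt
      obtain ⟨𝓖, ⟨h1, h2⟩, rfl⟩ := haS
      exact ⟨𝓖, h1, h2, hlt'.le⟩
  choose G hG1 hG2 hG3 using key
  set 𝓖 : Set (Set X) := ⋃ n, G n with h𝓖
  have h𝓖sub : 𝓖 ⊆ 𝓕 := iUnion_subset hG1
  have h𝓖c : 𝓖.Countable := countable_iUnion hG2
  have hUmeas : MeasurableSet (⋃₀ 𝓖) :=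
    MeasurableSet.sUnion h𝓖c (fun t ht => (h𝓕 t (h𝓖sub ht)).1)
  have hle_s : μ (A ∩ ⋃₀ 𝓖) ≤ s := le_sSup ⟨𝓖, ⟨h𝓖sub, h𝓖c⟩, rfl⟩
  have hs_le : s ≤ μ (A ∩ ⋃₀ 𝓖) := by
    refine ENNReal.le_of_forall_pos_le_add fun ε hε _ => ?_
    obtain ⟨n, hn⟩ := ENNReal.exists_inv_nat_lt
      (show (ε : ℝ≥0∞) ≠ 0 by exact_mod_cast hε.ne')
    have h1 : s - ((n : ℝ≥0∞) + 1)⁻¹ ≤ μ (A ∩ ⋃₀ (G n)) := hG3 n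
    have h2 : μ (A ∩ ⋃₀ (G n)) ≤ μ (A ∩ ⋃₀ 𝓖) :=
      measure_mono (inter_subset_inter_right _
        (sUnion_subset_sUnion (subset_iUnion G n)))
    have h3 : ((n : ℝ≥0∞) + 1)⁻¹ ≤ ((n : ℝ≥0∞))⁻¹ :=
      ENNReal.inv_le_inv' (le_add_of_nonneg_right zero_le_one)
    calc s ≤ μ (A ∩ ⋃₀ (G n)) + ((n : ℝ≥0∞) + 1)⁻¹ := tsub_le_iff_right.mp h1
      _ ≤ μ (A ∩ ⋃₀ 𝓖) + (ε : ℝ≥0∞) := add_le_add h2 (h3.trans hn.le)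
  have hUeq : μ (A ∩ ⋃₀ 𝓖) = s := le_antisymm hle_s hs_le
  refine ⟨A \ ⋃₀ 𝓖, hA.diff hUmeas, diff_subset, ?_, ?_⟩
  · by_contra h
    push_neg at h
    exact hno ⟨𝓖, h𝓖sub, h𝓖c, le_antisymm (le_of_not_gt (by simpa using h)) zero_le⟩
  · intro F hF
    have hFmeas := (h𝓕 F hF).1
    have hIns : μ (A ∩ ⋃₀ (insert F 𝓖)) ≤ s :=
      le_sSup ⟨insert F 𝓖, ⟨insert_subset hF h𝓖sub, h𝓖c.insert F⟩, rfl⟩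
    have hsetEq : A ∩ ⋃₀ (insert F 𝓖) = (A ∩ ⋃₀ 𝓖) ∪ (F ∩ (A \ ⋃₀ 𝓖)) := by
      rw [sUnion_insert]
      ext x
      simp only [mem_inter_iff, mem_union, mem_diff]
      tauto
    have hdisj : Disjoint (A ∩ ⋃₀ 𝓖) (F ∩ (A \ ⋃₀ 𝓖)) := by
      refine Set.disjoint_left.mpr fun x hx hx' => hx'.2.2 hx.2
    have hmeas2 : MeasurableSet (F ∩ (A \ ⋃₀ 𝓖)) := hFmeas.inter (hA.diff hUmeas)
    have hadd : μ (A ∩ ⋃₀ 𝓖) + μ (F ∩ (A \ ⋃₀ 𝓖)) ≤ s := by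
      rw [← measure_union hdisj hmeas2, ← hsetEq]; exact hIns
    rw [hUeq] at hadd
    by_contra hpos
    have : s < s + μ (F ∩ (A \ ⋃₀ 𝓖)) :=
      ENNReal.lt_add_right hsne hpos
    exact absurd hadd this.not_ge
end

section
/- Let $\mathscr{G}_\varepsilon = \{G\in\mathscr{G} : \mu(G)<\varepsilon\}$. The following are equivalent: (i) for every measurable $A$ with $0<\mu(A)<\infty$ and every $\varepsilon>0$, there exists $G\in\mathscr{G}_\varepsilon$ with $\mu(G\cap A)>0$; (ii) for every measurable $A$ with $0<\mu(A)<\infty$ and every $\varepsilon>0$, $\mathscr{G}_\varepsilon$ admits a countable subfamily covering $A$ up to a null set. -/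
open MeasureTheory ENNReal

/-- With `𝒢_ε = {G ∈ 𝒢 : μ G < ε}`, the following are equivalent:
(i) every `A ∈ 𝓜*` meets some member of `𝒢_ε` in positive measure, for every `ε > 0`;
(ii) every `A ∈ 𝓜*` admits a countable essential cover from `𝒢_ε`, for every `ε > 0`. -/
theorem stmt_12 {X : Type*} [MeasurableSpace X] (μ : Measure X)
    (𝒢 : Set (Set X))
    (h𝒢 : ∀ G ∈ 𝒢, MeasurableSet G ∧ 0 < μ G ∧ μ G < ∞) :
    (∀ A : Set X, MeasurableSet A → 0 < μ A → μ A < ∞ → ∀ ε : ℝ≥0∞, 0 < ε →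
        ∃ G ∈ 𝒢, μ G < ε ∧ 0 < μ (G ∩ A)) ↔
    (∀ A : Set X, MeasurableSet A → 0 < μ A → μ A < ∞ → ∀ ε : ℝ≥0∞, 0 < ε →
        ∃ 𝒢₀ : Set (Set X), 𝒢₀ ⊆ {G ∈ 𝒢 | μ G < ε} ∧ 𝒢₀.Countable ∧
          μ (A \ ⋃₀ 𝒢₀) = 0) := by
  constructor
  · intro h A hA hA0 hAfin ε hε
    set S : Set (Set X) := {G ∈ 𝒢 | μ G < ε} with hSdef
    have hS_ne : S.Nonempty := by
      obtain ⟨G, hG, hGε, _⟩ := h A hA hA0 hAfin ε hε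
      exact ⟨G, hG, hGε⟩
    have hsup_fin : ∀ B : Set X, (⨆ G' ∈ S, μ (G' ∩ (A ∩ B))) ≤ μ A := by
      intro B
      exact iSup₂_le fun G' _ => measure_mono (fun x hx => hx.2.1)
    have hpick : ∀ B : Set X, ∃ G ∈ S,
        (⨆ G' ∈ S, μ (G' ∩ (A ∩ B))) ≤ 2 * μ (G ∩ (A ∩ B)) := by
      intro B
      set s := ⨆ G' ∈ S, μ (G' ∩ (A ∩ B)) with hs
      rcases eq_or_ne s 0 with h0 | hpos
      · obtain ⟨G, hG⟩ := hS_ne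
        exact ⟨G, hG, by simp [← hs, h0]⟩
      · have hsfin : s ≠ ∞ := ((hsup_fin B).trans_lt hAfin).ne
        have hslt : s / 2 < s := ENNReal.half_lt_self hpos hsfin
        obtain ⟨G, hG2⟩ := lt_iSup_iff.mp hslt
        obtain ⟨hG, hGlt⟩ := lt_iSup_iff.mp hG2
        refine ⟨G, hG, ?_⟩
        calc s = 2 * (s / 2) := by
              rw [ENNReal.mul_div_cancel two_ne_zero ofNat_ne_top]
          _ ≤ 2 * μ (G ∩ (A ∩ B)) := by
              exact mul_le_mul_right hGlt.le 2
    choose pick hpickS hpickSup using hpick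
    let B : ℕ → Set X := fun n => Nat.rec A (fun _ Bn => Bn \ pick Bn) n
    have hBsucc : ∀ n, B (n + 1) = B n \ pick (B n) := fun n => rfl
    have hBsubA : ∀ n, B n ⊆ A := by
      intro n
      induction n with
      | zero => exact subset_rfl
      | succ n ih => exact Set.diff_subset.trans ih
    have hBinterA : ∀ n, A ∩ B n = B n := fun n =>
      Set.inter_eq_self_of_subset_right (hBsubA n)
    have hpickMeas : ∀ C : Set X, MeasurableSet (pick C) := fun C =>
      (h𝒢 _ (hpickS C).1).1
    have hBmeas : ∀ n, MeasurableSet (B n) := by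
      intro n
      induction n with
      | zero => exact hA
      | succ n ih => exact ih.diff (hpickMeas (B n))
    have hBanti : ∀ m n, m ≤ n → B n ⊆ B m := by
      intro m n hmn
      induction n with
      | zero => simp [Nat.le_zero.mp hmn]
      | succ n ih =>
        rcases Nat.le_succ_iff.mp hmn with h' | h'
        · exact (hBsucc n ▸ Set.diff_subset).trans (ih h')
        · simp [h']
    set D : ℕ → Set X := fun n => pick (B n) ∩ B n with hD
    have hDmeas : ∀ n, MeasurableSet (D n) := fun n =>
      (hpickMeas (B n)).inter (hBmeas n)
    have hDdisj : Pairwise (Function.onFun Disjoint D) := by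
      have key : ∀ m n, m < n → Disjoint (D m) (D n) := by
        intro m n hmn
        refine Set.disjoint_left.mpr fun x hxm hxn => ?_
        have hxBn : x ∈ B (m + 1) := hBanti _ _ hmn hxn.2
        rw [hBsucc m] at hxBn
        exact hxBn.2 hxm.1
      intro m n hmn
      rcases lt_or_gt_of_ne hmn with h' | h'
      · exact key m n h'
      · exact (key n m h').symm
    have htsum : ∑' n, μ (D n) ≤ μ A := by
      rw [← measure_iUnion hDdisj hDmeas]
      exact measure_mono (Set.iUnion_subset fun n x hx => hBsubA n hx.2)
    refine ⟨Set.range fun n => pick (B n), ?_, Set.countable_range _, ?_⟩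
    · rintro _ ⟨n, rfl⟩
      exact hpickS (B n)
    · rw [Set.sUnion_range]
      by_contra hR0
      have hRmeas : MeasurableSet (A \ ⋃ n, pick (B n)) :=
        hA.diff (MeasurableSet.iUnion fun n => hpickMeas (B n))
      have hRpos : 0 < μ (A \ ⋃ n, pick (B n)) := pos_iff_ne_zero.mpr hR0
      have hRfin : μ (A \ ⋃ n, pick (B n)) < ∞ :=
        (measure_mono Set.diff_subset).trans_lt hAfin
      obtain ⟨G, hG, hGε, hGR⟩ := h _ hRmeas hRpos hRfin ε hε
      have hGS : G ∈ S := ⟨hG, hGε⟩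
      have hRsubB : ∀ n, (A \ ⋃ n, pick (B n)) ⊆ B n := by
        intro n
        induction n with
        | zero => exact Set.diff_subset
        | succ n ih =>
          rw [hBsucc n]
          intro x hx
          exact ⟨ih hx, fun hxp => hx.2 (Set.mem_iUnion.mpr ⟨n, hxp⟩)⟩
      have hkey : ∀ n, μ (G ∩ (A \ ⋃ n, pick (B n))) / 2 ≤ μ (D n) := by
        intro n
        have h1 : μ (G ∩ (A \ ⋃ n, pick (B n))) ≤ μ (G ∩ (A ∩ B n)) :=
          measure_mono (Set.inter_subset_inter_right _
            (fun x hx => ⟨hx.1, hRsubB n hx⟩))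
        have h2 : μ (G ∩ (A ∩ B n)) ≤ ⨆ G' ∈ S, μ (G' ∩ (A ∩ B n)) :=
          le_iSup₂ (f := fun G' _ => μ (G' ∩ (A ∩ B n))) G hGS
        have h3 := hpickSup (B n)
        rw [hBinterA n] at h1 h2 h3
        rw [ENNReal.div_le_iff two_ne_zero ofNat_ne_top]
        calc μ (G ∩ (A \ ⋃ n, pick (B n))) ≤ 2 * μ (D n) := by
              rw [hD]
              calc μ (G ∩ (A \ ⋃ n, pick (B n)))
                  ≤ μ (G ∩ B n) := h1
                _ ≤ ⨆ G' ∈ S, μ (G' ∩ B n) := h2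
                _ ≤ 2 * μ (pick (B n) ∩ B n) := h3
          _ = μ (D n) * 2 := by rw [mul_comm]
      have hcpos : μ (G ∩ (A \ ⋃ n, pick (B n))) / 2 ≠ 0 :=
        (ENNReal.div_pos hGR.ne' ofNat_ne_top).ne'
      have : (∞ : ℝ≥0∞) ≤ μ A := by
        calc (∞ : ℝ≥0∞) = ∑' _ : ℕ, μ (G ∩ (A \ ⋃ n, pick (B n))) / 2 :=
              (ENNReal.tsum_const_eq_top_of_ne_zero hcpos).symm
          _ ≤ ∑' n, μ (D n) := ENNReal.tsum_le_tsum hkey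
          _ ≤ μ A := htsum
      exact absurd (top_le_iff.mp this ▸ hAfin) (lt_irrefl _)
  · intro h A hA hA0 hAfin ε hε
    obtain ⟨𝒢₀, h𝒢₀S, h𝒢₀c, h𝒢₀null⟩ := h A hA hA0 hAfin ε hε
    by_contra hcon
    push_neg at hcon
    have hnull : μ (⋃₀ 𝒢₀ ∩ A) = 0 := by
      rw [Set.sUnion_eq_biUnion, Set.iUnion₂_inter]
      refine measure_biUnion_null_iff h𝒢₀c |>.mpr fun G hG => ?_
      have := hcon G (h𝒢₀S hG).1 (h𝒢₀S hG).2
      exact le_antisymm (by simpa using this) zero_le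
    have : μ A ≤ μ (⋃₀ 𝒢₀ ∩ A) + μ (A \ ⋃₀ 𝒢₀) := by
      refine (measure_mono ?_).trans (measure_union_le _ _)
      intro x hx
      by_cases hxU : x ∈ ⋃₀ 𝒢₀
      · exact Or.inl ⟨hxU, hx⟩
      · exact Or.inr ⟨hx, hxU⟩
    rw [hnull, h𝒢₀null, add_zero] at this
    exact absurd (le_antisymm this zero_le) hA0.ne'
end

section
/- Let $\{E_n\}_{n\ge 1}$ be pairwise disjoint measurable sets with $0<\mu(E_n)\le 2^{-(n^2+1)}$ for all $n$, all contained in some $G_0\in\mathscr{G}$, and suppose $\alpha := \inf\{\mu(G) : G\in\mathscr{G},\ \mu(G\cap E)>0\} > 0$ where $E=\bigcup_n E_n$. Then the function $f = \sum_{n=1}^\infty \frac{2^{-n}}{\mu(E_n)}\chi_{E_n}$ satisfies $\|f\|_{BMO_\mathscr{G}} \le 2/\alpha$, but $\int_{G_0} |f|^2\,d\mu = \infty$, so $f\in BMO_\mathscr{G}(\mathbb{X})\setminus L^2_{loc}(\mathbb{X},\mathscr{G})$. -/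
open MeasureTheory ENNReal

private lemma aux_tsum_mem {X M : Type*} [AddCommMonoid M] [TopologicalSpace M] [T2Space M]
    {E : ℕ → Set X} (hd : Pairwise (Function.onFun Disjoint E)) (c : ℕ → M) {m : ℕ} {x : X}
    (hx : x ∈ E m) :
    ∑' n, (E n).indicator (fun _ => c n) x = c m := by
  have h0 : ∀ n, n ≠ m → (E n).indicator (fun _ => c n) x = 0 := fun n hn =>
    Set.indicator_of_notMem (Set.disjoint_right.mp (hd hn) hx) _
  rw [tsum_eq_single m h0, Set.indicator_of_mem hx]

private lemma aux_tsum_not_mem {X M : Type*} [AddCommMonoid M] [TopologicalSpace M]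
    {E : ℕ → Set X} (c : ℕ → M) {x : X} (hx : x ∉ ⋃ n, E n) :
    ∑' n, (E n).indicator (fun _ => c n) x = 0 := by
  have h : ∀ n, (E n).indicator (fun _ => c n) x = 0 := fun n =>
    Set.indicator_of_notMem (fun h => hx (Set.mem_iUnion.mpr ⟨n, h⟩)) _
  simp [h]

/-- Given pairwise disjoint sets `E_n ⊆ G₀` (n ≥ 1) with
`0 < μ(E_n) ≤ 2^{-(n²+1)}`, and `α ≥ a > 0` a lower bound on the measure of any generator
meeting `E = ⋃ E_n` in positive measure, the function `f = ∑ 2^{-n}/μ(E_n) χ_{E_n}`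
satisfies `‖f‖_{BMO_𝒢} ≤ 2/a` but `∫_{G₀} |f|² dμ = ∞`. -/
theorem stmt_13 {X : Type*} [MeasurableSpace X] (μ : Measure X)
    (𝒢 : Set (Set X))
    (h𝒢 : ∀ G ∈ 𝒢, MeasurableSet G ∧ 0 < μ G ∧ μ G < ∞)
    (G₀ : Set X) (hG₀ : G₀ ∈ 𝒢)
    (E : ℕ → Set X)
    (hEmeas : ∀ n, 1 ≤ n → MeasurableSet (E n))
    (hEdisj : ∀ m n, 1 ≤ m → 1 ≤ n → m ≠ n → Disjoint (E m) (E n))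
    (hEpos : ∀ n, 1 ≤ n → 0 < μ (E n))
    (hEsmall : ∀ n, 1 ≤ n → μ (E n) ≤ ((1 : ℝ≥0∞) / 2) ^ (n ^ 2 + 1))
    (hEsub : ∀ n, 1 ≤ n → E n ⊆ G₀)
    (a : ℝ) (ha : 0 < a)
    (hinf : ∀ G ∈ 𝒢, 0 < μ (G ∩ ⋃ n : ℕ, E (n + 1)) → ENNReal.ofReal a ≤ μ G)
    (f : X → ℝ)
    (hfdef : f = fun x => ∑' n : ℕ,
      (E (n + 1)).indicator (fun _ => ((1 : ℝ) / 2) ^ (n + 1) / (μ (E (n + 1))).toReal) x) :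
    (⨆ G ∈ 𝒢, ⨍⁻ x in G, ENNReal.ofReal |f x - ⨍ y in G, f y ∂μ| ∂μ) ≤
      ENNReal.ofReal (2 / a) ∧
    ∫⁻ x in G₀, ENNReal.ofReal ((f x) ^ 2) ∂μ = ∞ := by
  -- Basic facts about the sets
  set E' : ℕ → Set X := fun n => E (n + 1) with hE'
  have hE'meas : ∀ n, MeasurableSet (E' n) := fun n => hEmeas (n + 1) (by omega)
  have hE'disj : Pairwise (Function.onFun Disjoint E') := fun m n hmn =>
    hEdisj (m + 1) (n + 1) (by omega) (by omega) (by omega)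
  have hE'ne_top : ∀ n, μ (E' n) ≠ ∞ := by
    intro n
    refine ne_top_of_le_ne_top ?_ (hEsmall (n + 1) (by omega))
    exact pow_ne_top (by simp)
  have hE'ne_zero : ∀ n, μ (E' n) ≠ 0 := fun n => (hEpos (n + 1) (by omega)).ne'
  set t : ℕ → ℝ := fun n => (μ (E' n)).toReal with ht
  have htpos : ∀ n, 0 < t n := fun n =>
    ENNReal.toReal_pos (hE'ne_zero n) (hE'ne_top n)
  set c : ℕ → ℝ := fun n => ((1 : ℝ) / 2) ^ (n + 1) / t n with hc
  have hcpos : ∀ n, 0 < c n := fun n => div_pos (by positivity) (htpos n)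
  set cE : ℕ → ℝ≥0∞ := fun n => ((1 : ℝ≥0∞) / 2) ^ (n + 1) / μ (E' n) with hcE
  have hofReal_c : ∀ n, ENNReal.ofReal (c n) = cE n := by
    intro n
    rw [hc, ENNReal.ofReal_div_of_pos (htpos n), ENNReal.ofReal_pow (by norm_num),
      ENNReal.ofReal_toReal (hE'ne_top n),
      show ENNReal.ofReal ((1:ℝ)/2) = (1:ℝ≥0∞)/2 by
        rw [ENNReal.ofReal_div_of_pos (by norm_num), ENNReal.ofReal_one, ENNReal.ofReal_ofNat]]
  set S : Set X := ⋃ n, E' n with hS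
  have hSmeas : MeasurableSet S := MeasurableSet.iUnion hE'meas
  set g : X → ℝ≥0∞ := fun x => ∑' n, (E' n).indicator (fun _ => cE n) x with hg
  have hgmeas : Measurable g :=
    Measurable.ennreal_tsum fun n => measurable_const.indicator (hE'meas n)
  have hf_mem : ∀ {n x}, x ∈ E' n → f x = c n := by
    intro n x hx
    rw [hfdef]
    exact aux_tsum_mem hE'disj c hx
  have hf_not_mem : ∀ {x}, x ∉ S → f x = 0 := by
    intro x hx
    rw [hfdef]
    exact aux_tsum_not_mem c hx
  have hg_mem : ∀ {n x}, x ∈ E' n → g x = cE n := fun hx => aux_tsum_mem hE'disj cE hx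
  have hg_not_mem : ∀ {x}, x ∉ S → g x = 0 := fun hx => aux_tsum_not_mem cE hx
  have hfg : ∀ x, ENNReal.ofReal (f x) = g x := by
    intro x
    by_cases hx : x ∈ S
    · obtain ⟨n, hn⟩ := Set.mem_iUnion.mp hx
      rw [hf_mem hn, hg_mem hn, hofReal_c]
    · rw [hf_not_mem hx, hg_not_mem hx]; simp
  have hf_nonneg : ∀ x, 0 ≤ f x := by
    intro x
    by_cases hx : x ∈ S
    · obtain ⟨n, hn⟩ := Set.mem_iUnion.mp hx
      rw [hf_mem hn]; exact (hcpos n).le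
    · rw [hf_not_mem hx]
  have hf_toReal : ∀ x, f x = (g x).toReal := by
    intro x
    rw [← hfg x, ENNReal.toReal_ofReal (hf_nonneg x)]
  -- total integral of g is 1
  have hgeom : ∑' n : ℕ, ((1 : ℝ≥0∞) / 2) ^ (n + 1) = 1 := by
    have h1 : (fun n : ℕ => ((1 : ℝ≥0∞) / 2) ^ (n + 1)) =
        fun n : ℕ => (1 / 2) * ((1 : ℝ≥0∞) / 2) ^ n := by
      funext n; rw [pow_succ, mul_comm]
    rw [h1, ENNReal.tsum_mul_left, ENNReal.tsum_geometric]
    rw [one_div, ENNReal.one_sub_inv_two, inv_inv]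
    exact ENNReal.inv_mul_cancel (by norm_num) (by norm_num)
  have hg_int : ∫⁻ x, g x ∂μ = 1 := by
    rw [hg]
    rw [lintegral_tsum fun n => (measurable_const.indicator (hE'meas n)).aemeasurable]
    have h1 : ∀ n : ℕ, ∫⁻ x, (E' n).indicator (fun _ => cE n) x ∂μ =
        ((1 : ℝ≥0∞) / 2) ^ (n + 1) := by
      intro n
      rw [lintegral_indicator_const (hE'meas n), hcE]
      exact ENNReal.div_mul_cancel (hE'ne_zero n) (hE'ne_top n)
    simp_rw [h1]
    exact hgeom
  constructor
  · -- BMO bound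
    refine iSup₂_le fun G hG => ?_
    obtain ⟨hGm, hGpos, hGfin⟩ := h𝒢 G hG
    by_cases hzero : μ (G ∩ S) = 0
    · -- f vanishes a.e. on G
      have hrS : (μ.restrict G) S = 0 := by
        rw [Measure.restrict_apply hSmeas, Set.inter_comm]; exact hzero
      have hae : f =ᵐ[μ.restrict G] 0 := by
        rw [Filter.eventuallyEq_iff_exists_mem]
        exact ⟨Sᶜ, by rwa [mem_ae_iff, compl_compl], fun x hx => hf_not_mem hx⟩
      have havg : (⨍ y in G, f y ∂μ) = 0 := by
        rw [setAverage_eq, integral_congr_ae hae]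
        simp
      rw [havg, setLAverage_eq]
      have hz : ∫⁻ x in G, ENNReal.ofReal |f x - 0| ∂μ = 0 := by
        have h0 : (fun x => ENNReal.ofReal |f x - 0|) =ᵐ[μ.restrict G] fun _ => 0 :=
          hae.mono fun x hx => by
            simp only [Pi.zero_apply] at hx
            simp [hx]
        rw [lintegral_congr_ae h0]
        simp
      rw [hz]
      simp
    · -- main case
      have halpha : ENNReal.ofReal a ≤ μ G := hinf G hG (pos_iff_ne_zero.mpr hzero)
      have hint : Integrable f (μ.restrict G) := by
        have h1 : ∫⁻ x, g x ∂(μ.restrict G) ≠ ∞ := by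
          refine ne_top_of_le_ne_top (by simp : (1 : ℝ≥0∞) ≠ ∞) ?_
          rw [← hg_int]
          exact setLIntegral_le_lintegral _ _
        have := integrable_toReal_of_lintegral_ne_top
          (hgmeas.aemeasurable (μ := μ.restrict G)) h1
        refine this.congr (Filter.Eventually.of_forall fun x => (hf_toReal x).symm)
      set m : ℝ := ⨍ y in G, f y ∂μ with hm
      have hintG : ∫⁻ x in G, ENNReal.ofReal (f x) ∂μ ≤ 1 := by
        rw [← hg_int]
        exact le_trans (le_of_eq (lintegral_congr fun x => hfg x)) (setLIntegral_le_lintegral _ _)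
      have hm_nonneg : 0 ≤ m := by
        rw [hm, setAverage_eq, smul_eq_mul]
        exact mul_nonneg (by positivity) (integral_nonneg hf_nonneg)
      have hofm : ENNReal.ofReal m * μ G ≤ 1 := by
        have h1 : ENNReal.ofReal m ≤ (μ G)⁻¹ := by
          rw [hm, setAverage_eq, smul_eq_mul, ENNReal.ofReal_mul (by positivity)]
          have h2 : ENNReal.ofReal (∫ x in G, f x ∂μ) ≤ 1 := by
            rw [ofReal_integral_eq_lintegral_ofReal hint
              (Filter.Eventually.of_forall hf_nonneg)]
            exact hintG
          have h3 : ENNReal.ofReal (μ G).toReal⁻¹ = (μ G)⁻¹ := by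
            rw [ENNReal.ofReal_inv_of_pos (ENNReal.toReal_pos hGpos.ne' hGfin.ne),
              ENNReal.ofReal_toReal hGfin.ne]
          calc ENNReal.ofReal (μ G).toReal⁻¹ * ENNReal.ofReal (∫ x in G, f x ∂μ)
              ≤ ENNReal.ofReal (μ G).toReal⁻¹ * 1 := by
                exact mul_le_mul_right h2 _
            _ = (μ G)⁻¹ := by rw [mul_one, h3]
        calc ENNReal.ofReal m * μ G ≤ (μ G)⁻¹ * μ G := mul_le_mul_left h1 _
          _ = 1 := ENNReal.inv_mul_cancel hGpos.ne' hGfin.ne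
      have hptwise : ∀ x, ENNReal.ofReal |f x - m| ≤ ENNReal.ofReal (f x) + ENNReal.ofReal m := by
        intro x
        calc ENNReal.ofReal |f x - m| ≤ ENNReal.ofReal (f x + m) := by
              refine ENNReal.ofReal_le_ofReal ?_
              calc |f x - m| ≤ |f x| + |m| := abs_sub _ _
                _ = f x + m := by rw [abs_of_nonneg (hf_nonneg x), abs_of_nonneg hm_nonneg]
          _ = ENNReal.ofReal (f x) + ENNReal.ofReal m :=
              ENNReal.ofReal_add (hf_nonneg x) hm_nonneg
      calc ⨍⁻ x in G, ENNReal.ofReal |f x - m| ∂μ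
          = (∫⁻ x in G, ENNReal.ofReal |f x - m| ∂μ) / μ G := setLAverage_eq _ _ _
        _ ≤ (∫⁻ x in G, (ENNReal.ofReal (f x) + ENNReal.ofReal m) ∂μ) / μ G := by
            exact ENNReal.div_le_div_right (lintegral_mono hptwise) _
        _ = ((∫⁻ x in G, ENNReal.ofReal (f x) ∂μ) + ENNReal.ofReal m * μ G) / μ G := by
            rw [lintegral_add_right _ measurable_const, lintegral_const,
              Measure.restrict_apply_univ]
        _ ≤ (1 + 1) / μ G := by
            exact ENNReal.div_le_div_right (add_le_add hintG hofm) _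
        _ ≤ (1 + 1) / ENNReal.ofReal a := ENNReal.div_le_div_left halpha _
        _ = ENNReal.ofReal (2 / a) := by
            rw [ENNReal.ofReal_div_of_pos ha]
            norm_num
  · -- divergence of the square integral
    have key : ∀ n : ℕ, (1 : ℝ≥0∞) ≤ ∫⁻ x in E' n, ENNReal.ofReal (f x ^ 2) ∂μ := by
      intro n
      have h1 : ∫⁻ x in E' n, ENNReal.ofReal (f x ^ 2) ∂μ =
          ENNReal.ofReal (c n ^ 2) * μ (E' n) := by
        rw [setLIntegral_congr_fun_ae (hE'meas n)
          (Filter.Eventually.of_forall fun x hx => by rw [hf_mem hx])]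
        exact setLIntegral_const _ _
      rw [h1]
      have h2 : μ (E' n) = ENNReal.ofReal (t n) := (ENNReal.ofReal_toReal (hE'ne_top n)).symm
      rw [h2, ← ENNReal.ofReal_mul (by positivity)]
      have h3 : t n ≤ ((1 : ℝ) / 2) ^ (2 * n + 2) := by
        have h4 : t n ≤ ((1 : ℝ) / 2) ^ ((n + 1) ^ 2 + 1) := by
          have := ENNReal.toReal_mono (by exact pow_ne_top (by simp))
            (hEsmall (n + 1) (by omega))
          simpa [ENNReal.toReal_pow, ENNReal.toReal_div] using this
        refine h4.trans (pow_le_pow_of_le_one (by norm_num) (by norm_num) ?_)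
        nlinarith
      have h5 : (1 : ℝ) ≤ c n ^ 2 * t n := by
        have hcn : c n = ((1 : ℝ) / 2) ^ (n + 1) / t n := rfl
        rw [hcn, div_pow, ← pow_mul, show (n + 1) * 2 = 2 * n + 2 from by ring,
          div_mul_eq_mul_div, le_div_iff₀ (pow_pos (htpos n) 2), one_mul, pow_two]
        exact mul_le_mul_of_nonneg_right h3 (htpos n).le

      calc (1 : ℝ≥0∞) = ENNReal.ofReal 1 := ENNReal.ofReal_one.symm
        _ ≤ ENNReal.ofReal (c n ^ 2 * t n) := ENNReal.ofReal_le_ofReal h5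
    have hsub : S ⊆ G₀ := Set.iUnion_subset fun n => hEsub (n + 1) (by omega)
    have htop : (⊤ : ℝ≥0∞) ≤ ∫⁻ x in G₀, ENNReal.ofReal (f x ^ 2) ∂μ := by
      calc (⊤ : ℝ≥0∞) = ∑' _ : ℕ, (1 : ℝ≥0∞) :=
            (ENNReal.tsum_const_eq_top_of_ne_zero (by norm_num)).symm
        _ ≤ ∑' n : ℕ, ∫⁻ x in E' n, ENNReal.ofReal (f x ^ 2) ∂μ :=
            ENNReal.tsum_le_tsum key
        _ = ∫⁻ x in S, ENNReal.ofReal (f x ^ 2) ∂μ :=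
            (lintegral_iUnion hE'meas hE'disj _).symm
        _ ≤ ∫⁻ x in G₀, ENNReal.ofReal (f x ^ 2) ∂μ := lintegral_mono_set hsub
    exact top_le_iff.mp htop
end

section
/- Let $X=(0,1)^2$ with Lebesgue measure and $\mathscr{G}=\{(c,d)\times(0,1) : 0\le c<d\le 1\}$. The function $f(x,y)=y^{-1/2}$ satisfies $\fint_R |f|\,d\mu = 2$ for every $R\in\mathscr{G}$ (hence $\|f\|_{BMO_\mathscr{G}} \le 4$ and $f\in BMO_\mathscr{G}$), but $\int_R |f|^2\,d\mu=\infty$ for every $R\in\mathscr{G}$, so $f\notin L^2_{loc}(\mathbb{X},\mathscr{G})$. -/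
open MeasureTheory ENNReal Real Set

lemma aux_integrableOn : IntegrableOn (fun y : ℝ => y ^ (-(1 / 2) : ℝ)) (Ioo 0 1) volume := by
  rw [← intervalIntegrable_iff_integrableOn_Ioo_of_le (by norm_num : (0:ℝ) ≤ 1)]
  exact intervalIntegral.intervalIntegrable_rpow' (by norm_num)

lemma aux_integral : ∫ y in Ioo (0:ℝ) 1, y ^ (-(1 / 2) : ℝ) = 2 := by
  rw [← integral_Ioc_eq_integral_Ioo,
    ← intervalIntegral.integral_of_le (by norm_num : (0:ℝ) ≤ 1),
    integral_rpow (Or.inl (by norm_num))]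
  rw [Real.zero_rpow (by norm_num), Real.one_rpow]
  norm_num

lemma aux_lintegral_inv : ∫⁻ y in Ioo (0:ℝ) 1, ENNReal.ofReal (y ^ (-1 : ℝ)) = ∞ := by
  by_contra h
  have hmeas : Measurable (fun y : ℝ => y ^ (-1 : ℝ)) :=
    (measurable_id.pow_const _)
  have hnonneg : 0 ≤ᵐ[volume.restrict (Ioo (0:ℝ) 1)] fun y : ℝ => y ^ (-1 : ℝ) := by
    filter_upwards [self_mem_ae_restrict measurableSet_Ioo] with y hy
    exact Real.rpow_nonneg hy.1.le _
  have hint : IntegrableOn (fun y : ℝ => y ^ (-1 : ℝ)) (Ioo 0 1) volume := by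
    refine ⟨hmeas.aestronglyMeasurable, ?_⟩
    rw [hasFiniteIntegral_iff_ofReal hnonneg]
    exact lt_top_iff_ne_top.2 h
  rw [intervalIntegral.integrableOn_Ioo_rpow_iff one_pos] at hint
  linarith

/-- On `(0,1)²` with Lebesgue measure and generators the vertical strips
`(c,d) × (0,1)`, the function `f(x,y) = y^{-1/2}` has `⨍_R |f| = 2` on every generator
(hence `‖f‖_{BMO_𝒢} ≤ 4`, so `f ∈ BMO_𝒢`), yet `∫_R |f|² = ∞` on every generator,
so `f ∉ L²_loc(𝕏,𝒢)`. -/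
theorem stmt_14
    (f : ℝ × ℝ → ℝ) (hf : f = fun p => p.2 ^ (-(1 / 2) : ℝ)) :
    ∀ c d : ℝ, 0 ≤ c → c < d → d ≤ 1 →
      (⨍ p in Ioo c d ×ˢ Ioo (0 : ℝ) 1, |f p| ∂(volume : Measure (ℝ × ℝ))) = 2 ∧
      (⨍ p in Ioo c d ×ˢ Ioo (0 : ℝ) 1,
          |f p - ⨍ q in Ioo c d ×ˢ Ioo (0 : ℝ) 1, f q ∂(volume : Measure (ℝ × ℝ))|
          ∂(volume : Measure (ℝ × ℝ))) ≤ 4 ∧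
      ∫⁻ p in Ioo c d ×ˢ Ioo (0 : ℝ) 1,
          ENNReal.ofReal ((f p) ^ 2) ∂(volume : Measure (ℝ × ℝ)) = ∞ := by
  intro c d hc hcd hd1
  set R : Set (ℝ × ℝ) := Ioo c d ×ˢ Ioo (0 : ℝ) 1 with hR
  have hRmeas : MeasurableSet R := (measurableSet_Ioo.prod measurableSet_Ioo)
  have hdc : (0:ℝ) < d - c := by linarith
  -- volume of R
  have hvol : (volume : Measure (ℝ × ℝ)) R = ENNReal.ofReal (d - c) := by
    rw [hR, Measure.volume_eq_prod, Measure.prod_prod, Real.volume_Ioo, Real.volume_Ioo]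
    simp
  have hvolR : ((volume : Measure (ℝ × ℝ)) R).toReal = d - c := by
    rw [hvol, ENNReal.toReal_ofReal hdc.le]
  -- the integral of f over R
  have hfeq : EqOn f (fun p : ℝ × ℝ => (fun _ : ℝ => (1:ℝ)) p.1 * (fun y : ℝ => y ^ (-(1 / 2) : ℝ)) p.2) R := by
    intro p hp
    simp [hf]
  have hint : ∫ p in R, f p ∂(volume : Measure (ℝ × ℝ)) = (d - c) * 2 := by
    have hpm := setIntegral_prod_mul (μ := (volume : Measure ℝ)) (ν := (volume : Measure ℝ))
      (fun _ : ℝ => (1:ℝ)) (fun y : ℝ => y ^ (-(1 / 2) : ℝ)) (Ioo c d) (Ioo (0:ℝ) 1)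
    rw [setIntegral_congr_fun hRmeas hfeq, hR, Measure.volume_eq_prod, hpm, aux_integral]
    simp [hcd.le]
  -- |f| = f on R
  have habs : EqOn (fun p : ℝ × ℝ => |f p|) f R := by
    intro p hp
    exact abs_of_nonneg (by rw [hf]; exact Real.rpow_nonneg hp.2.1.le _)
  have hintabs : ∫ p in R, |f p| ∂(volume : Measure (ℝ × ℝ)) = (d - c) * 2 := by
    rw [setIntegral_congr_fun hRmeas habs]; exact hint
  -- integrability of f on R
  have hfint : IntegrableOn f R (volume : Measure (ℝ × ℝ)) := by
    have h1 : IntegrableOn (fun p : ℝ × ℝ =>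
        (fun _ : ℝ => (1:ℝ)) p.1 * (fun y : ℝ => y ^ (-(1 / 2) : ℝ)) p.2) R volume := by
      rw [hR, IntegrableOn, Measure.volume_eq_prod, ← Measure.prod_restrict]
      exact Integrable.mul_prod
        (integrableOn_const (C := (1:ℝ)) (by rw [Real.volume_Ioo]; exact ofReal_ne_top))
        aux_integrableOn
    exact (integrableOn_congr_fun hfeq hRmeas).2 h1
  -- average of f over R
  have havgf : (⨍ q in R, f q ∂(volume : Measure (ℝ × ℝ))) = 2 := by
    rw [setAverage_eq, hint, measureReal_def, hvolR]
    rw [smul_eq_mul]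
    field_simp
  have havgabs : (⨍ p in R, |f p| ∂(volume : Measure (ℝ × ℝ))) = 2 := by
    rw [setAverage_eq, hintabs, measureReal_def, hvolR, smul_eq_mul]
    field_simp
  refine ⟨havgabs, ?_, ?_⟩
  · -- BMO bound
    rw [havgf]
    have hconst : IntegrableOn (fun _ : ℝ × ℝ => (2:ℝ)) R volume :=
      integrableOn_const (by rw [hvol]; exact ofReal_ne_top)
    have hsub : IntegrableOn (fun p : ℝ × ℝ => |f p - 2|) R volume :=
      (hfint.sub hconst).abs
    have hrhs : IntegrableOn (fun p : ℝ × ℝ => |f p| + 2) R volume :=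
      hfint.abs.add hconst
    have hmono : ∫ p in R, |f p - 2| ∂(volume : Measure (ℝ × ℝ)) ≤
        ∫ p in R, (|f p| + 2) ∂(volume : Measure (ℝ × ℝ)) := by
      refine integral_mono hsub hrhs fun p => ?_
      calc |f p - 2| ≤ |f p| + |(2:ℝ)| := abs_sub _ _
        _ = |f p| + 2 := by norm_num
    have hrhsval : ∫ p in R, (|f p| + 2) ∂(volume : Measure (ℝ × ℝ)) = (d - c) * 4 := by
      rw [integral_add hfint.abs hconst, hintabs, setIntegral_const, measureReal_def, hvolR, smul_eq_mul]
      ring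
    rw [setAverage_eq, measureReal_def, hvolR, smul_eq_mul]
    calc (d - c)⁻¹ * ∫ p in R, |f p - 2| ∂(volume : Measure (ℝ × ℝ))
        ≤ (d - c)⁻¹ * ((d - c) * 4) := by
          apply mul_le_mul_of_nonneg_left _ (inv_nonneg.2 hdc.le)
          rw [← hrhsval]; exact hmono
      _ = 4 := by field_simp
  · -- L² blowup
    have hsq : ∀ p ∈ R, ENNReal.ofReal ((f p) ^ 2) = ENNReal.ofReal (p.2 ^ (-1 : ℝ)) := by
      intro p hp
      congr 1
      rw [hf]
      rw [← Real.rpow_natCast (p.2 ^ (-(1/2) : ℝ)) 2, ← Real.rpow_mul hp.2.1.le]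
      norm_num
    rw [setLIntegral_congr_fun hRmeas hsq]
    rw [hR, Measure.volume_eq_prod, ← Measure.prod_restrict, lintegral_prod _
      (by exact (measurable_snd.pow_const _).ennreal_ofReal.aemeasurable)]
    have hin : (fun x : ℝ => ∫⁻ y in Ioo (0:ℝ) 1, ENNReal.ofReal ((x, y).2 ^ (-1 : ℝ)))
        = fun _ : ℝ => (∞ : ℝ≥0∞) := by
      funext x; exact aux_lintegral_inv
    rw [hin, setLIntegral_const, Real.volume_Ioo]
    rw [ENNReal.top_mul (by simp [hdc.not_ge, not_le.2 hdc])]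
end

section
/- Let $(X,\rho)$ be a connected metric space with a Borel measure $\mu$ such that $\mu(B)>0$ for every open ball $B$, and suppose every point has a neighborhood of finite measure. Then every ball that is non-separable has infinite measure; consequently, if additionally every point lies in some open set of finite measure, then every point has a separable ball around it. -/
open MeasureTheory ENNReal Metric Set

/-- A ball of finite measure is separable, when the measure is positive on all balls. -/
theorem sep_of_fin_aux {X : Type*} [MetricSpace X] [MeasurableSpace X] [OpensMeasurableSpace X]
    (μ : Measure X) (hpos : ∀ (x : X) (r : ℝ), 0 < r → 0 < μ (ball x r))
    (x : X) (r : ℝ) (hμ : μ (ball x r) ≠ ∞) :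
    TopologicalSpace.IsSeparable (ball x r) := by
  have hdense : ∀ ε > 0, ∃ t : Set X, t.Countable ∧
      ball x r ⊆ ⋃ z ∈ t, EMetric.closedBall z ε := ?_
  · obtain ⟨t, hts, htc, hst⟩ := EMetric.subset_countable_closure_of_almost_dense_set
      (ball x r) (fun ε hε => (hdense ε hε).imp fun t ht => ⟨ht.1, ht.2⟩)
    exact ⟨t, htc, hst⟩
  intro ε hε
  -- get a real radius δ with 0 < δ and ofReal δ ≤ ε
  obtain ⟨δ, hδ0, hδε⟩ : ∃ δ : ℝ, 0 < δ ∧ ENNReal.ofReal δ ≤ ε := by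
    refine ⟨(min ε 1).toReal, ?_, ?_⟩
    · apply ENNReal.toReal_pos
      · exact (lt_min hε zero_lt_one).ne'
      · exact ne_top_of_le_ne_top one_ne_top (min_le_right _ _)
    · rw [ENNReal.ofReal_toReal (ne_top_of_le_ne_top one_ne_top (min_le_right _ _))]
      exact min_le_left _ _
  -- for each n, find a countable δ-net of the shrunken ball
  have key : ∀ n : ℕ, ∃ t : Set X, t.Countable ∧
      {y : X | dist y x ≤ r - 1/(n+1)} ⊆ ⋃ z ∈ t, closedBall z δ := by
    intro n
    set S : Set X := {y : X | dist y x ≤ r - 1/(n+1)} with hS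
    -- Zorn: a maximal δ-separated subset of S
    obtain ⟨m, hm⟩ : ∃ m, Maximal
        (· ∈ {t : Set X | t ⊆ S ∧ t.Pairwise (fun a b => δ ≤ dist a b)}) m := by
      apply zorn_subset
      intro c hc hchain
      refine ⟨⋃₀ c, ⟨?_, ?_⟩, fun s hs => subset_sUnion_of_mem hs⟩
      · exact sUnion_subset fun s hs => (hc hs).1
      · intro a ha b hb hab
        obtain ⟨s, hs, has⟩ := ha
        obtain ⟨u, hu, hbu⟩ := hb
        rcases hchain.total hs hu with h | h
        · exact (hc hu).2 (h has) hbu hab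
        · exact (hc hs).2 has (h hbu) hab
    -- maximality gives the net property
    have hnet : S ⊆ ⋃ z ∈ m, closedBall z δ := by
      intro y hy
      by_contra hyn
      simp only [mem_iUnion, mem_closedBall, not_exists, not_and, not_le] at hyn
      have hym : y ∉ m := fun h => absurd (hyn y h) (by simp [hδ0.le])
      have : insert y m ∈ {t : Set X | t ⊆ S ∧ t.Pairwise (fun a b => δ ≤ dist a b)} := by
        refine ⟨insert_subset hy hm.prop.1, ?_⟩
        intro a ha b hb hab
        rcases ha with rfl | ha
        · rcases hb with rfl | hb
          · exact absurd rfl hab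
          · exact (hyn b hb).le
        · rcases hb with rfl | hb
          · exact le_of_lt (by rw [dist_comm]; exact hyn a ha)
          · exact hm.prop.2 ha hb hab
      have := hm.2 this (subset_insert y m)
      exact hym (this (mem_insert y m))
    -- countability via disjoint balls of positive measure
    set ρ : ℝ := min (δ/2) (1/(n+1)) with hρ
    have hρ0 : 0 < ρ := lt_min (by linarith) (by positivity)
    have hdisj : Pairwise (Function.onFun Disjoint fun z : m => ball (z : X) ρ) := by
      intro a b hab
      have hd : δ ≤ dist (a : X) (b : X) :=
        hm.prop.2 a.2 b.2 (fun h => hab (Subtype.ext h))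
      apply ball_disjoint_ball
      calc ρ + ρ ≤ δ/2 + δ/2 := add_le_add (min_le_left _ _) (min_le_left _ _)
        _ = δ := by ring
        _ ≤ dist (a:X) (b:X) := hd
    have hsub : ∀ z : m, ball (z : X) ρ ⊆ ball x r := by
      rintro ⟨z, hz⟩ w hw
      simp only [mem_ball] at hw ⊢
      have h1 : dist z x ≤ r - 1/(n+1) := hm.prop.1 hz
      have h2 : ρ ≤ 1/(n+1) := min_le_right _ _
      calc dist w x ≤ dist w z + dist z x := dist_triangle _ _ _
        _ < ρ + (r - 1/(n+1)) := add_lt_add_of_lt_of_le hw h1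
        _ ≤ r := by linarith
    have hcnt : Set.Countable {i : m | 0 < μ (ball (i : X) ρ)} := by
      apply Measure.countable_meas_pos_of_disjoint_of_meas_iUnion_ne_top μ
        (fun i => measurableSet_ball) hdisj
      refine ne_top_of_le_ne_top hμ (measure_mono ?_)
      exact iUnion_subset fun i => hsub i
    have : Set.Countable (univ : Set m) := by
      have : {i : m | 0 < μ (ball (i : X) ρ)} = univ := by
        ext i; simp [hpos (i : X) ρ hρ0]
      rwa [this] at hcnt
    have hmc : m.Countable := by
      rw [← Set.countable_coe_iff]
      exact countable_univ_iff.mp (Set.countable_coe_iff.mp this)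
    exact ⟨m, hmc, hnet⟩
  choose T hTc hTs using key
  refine ⟨⋃ n, T n, countable_iUnion hTc, fun y hy => ?_⟩
  obtain ⟨n, hn⟩ : ∃ n : ℕ, 1/(n+1:ℝ) < r - dist y x := by
    obtain ⟨n, hn⟩ := exists_nat_one_div_lt (by simpa [sub_pos, dist_comm] using hy : 0 < r - dist y x)
    exact ⟨n, hn⟩
  have hyS : y ∈ {y : X | dist y x ≤ r - 1/(n+1)} := by
    simp only [Set.mem_setOf_eq]; linarith
  obtain ⟨z, hz, hyz⟩ := mem_iUnion₂.1 (hTs n hyS)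
  refine mem_iUnion₂.2 ⟨z, mem_iUnion.2 ⟨n, hz⟩, ?_⟩
  change edist y z ≤ ε
  calc edist y z ≤ ENNReal.ofReal δ := (edist_le_ofReal hδ0.le).2 hyz
    _ ≤ ε := hδε

/-- In a connected metric space with a Borel measure positive on every ball
and such that every point has a neighbourhood of finite measure, every non-separable ball
has infinite measure; consequently every point has a separable ball around it. -/
theorem stmt_18 {X : Type*} [MetricSpace X] [MeasurableSpace X] [OpensMeasurableSpace X]
    [ConnectedSpace X] (μ : Measure X)
    (hpos : ∀ (x : X) (r : ℝ), 0 < r → 0 < μ (ball x r))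
    (hfin : ∀ x : X, ∃ U ∈ nhds x, μ U < ∞) :
    (∀ (x : X) (r : ℝ), 0 < r → ¬ TopologicalSpace.IsSeparable (ball x r) →
      μ (ball x r) = ∞) ∧
    ∀ x : X, ∃ r : ℝ, 0 < r ∧ TopologicalSpace.IsSeparable (ball x r) := by
  constructor
  · intro x r _ hns
    by_contra h
    exact hns (sep_of_fin_aux μ hpos x r h)
  · intro x
    obtain ⟨U, hU, hUfin⟩ := hfin x
    obtain ⟨r, hr0, hrU⟩ := Metric.mem_nhds_iff.1 hU
    refine ⟨r, hr0, sep_of_fin_aux μ hpos x r ?_⟩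
    exact ne_top_of_le_ne_top hUfin.ne (measure_mono hrU)
end
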